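/- Define Δ₁(E) = Δ(E) + Δ(E)ᵀ + (E − Δ(E))ᵀ(E − Δ(E)) where Δ(E) = (I+E)⁻¹ − I + E. If ‖E‖₂ < 1, then ‖Δ₁(E)‖₂ ≤ (3 − 2‖E‖₂)·‖E‖₂² / (1 − ‖E‖₂)². -/

import Mathlib

open Matrix

noncomputable def sn {n : Type*} [Fintype n] [DecidableEq n] (M : Matrix n n ℝ) : ℝ :=
  ‖Matrix.toEuclideanCLM (𝕜 := ℝ) (n := n) M‖

set_option synthInstance.maxHeartbeats 1000000
set_option maxHeartbeats 1000000

section helper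
variable {n : Type*} [Fintype n] [DecidableEq n]

lemma sn_nonneg (A : Matrix n n ℝ) : 0 ≤ sn A := norm_nonneg _

lemma sn_add_le (A B : Matrix n n ℝ) : sn (A + B) ≤ sn A + sn B := by
  simpa [sn, _root_.map_add] using norm_add_le _ _

lemma sn_mul_le (A B : Matrix n n ℝ) : sn (A * B) ≤ sn A * sn B := by
  simpa [sn, _root_.map_mul] using norm_mul_le _ _

lemma sn_one_le : sn (1 : Matrix n n ℝ) ≤ 1 := by
  rw [sn, _root_.map_one]
  exact ContinuousLinearMap.norm_id_le

lemma sn_transpose (A : Matrix n n ℝ) : sn Aᵀ = sn A := by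
  have h : Aᵀ = star A := by
    ext i j
    simp [Matrix.star_eq_conjTranspose, Matrix.conjTranspose_apply]
  rw [h]
  simp only [sn, map_star]
  rw [ContinuousLinearMap.star_eq_adjoint]
  exact ContinuousLinearMap.adjoint.norm_map _

lemma sn_sub_le (A B : Matrix n n ℝ) : sn (A - B) ≤ sn A + sn B := by
  simpa [sn, _root_.map_sub] using norm_sub_le _ _

end helper

noncomputable def Delta {n : Type*} [Fintype n] [DecidableEq n] (E : Matrix n n ℝ) : Matrix n n ℝ :=
  (1 + E)⁻¹ - 1 + E

noncomputable def Delta1 {n : Type*} [Fintype n] [DecidableEq n] (E : Matrix n n ℝ) : Matrix n n ℝ :=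
  Delta E + (Delta E)ᵀ + (E - Delta E)ᵀ * (E - Delta E)

noncomputable def Delta2 {n : Type*} [Fintype n] [DecidableEq n] (E D : Matrix n n ℝ) : Matrix n n ℝ :=
  -(D * Delta E) - (D * Delta E)ᵀ - (E - Delta E)ᵀ * D * (E - Delta E)

noncomputable def DDelta {n : Type*} [Fintype n] [DecidableEq n] (F H : Matrix n n ℝ) : Matrix n n ℝ :=
  ∑' k : ℕ, ((-1 : ℝ)^(k+2)) • ∑ l ∈ Finset.range (k+2), F^l * H * F^(k+1-l)

noncomputable def frob {n : Type*} [Fintype n] (M : Matrix n n ℝ) : ℝ :=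
  Real.sqrt (∑ i, ∑ j, (M i j)^2)

theorem stmt4 {n : Type*} [Fintype n] [DecidableEq n] (E : Matrix n n ℝ) (hE : sn E < 1) :
    sn (Delta1 E) ≤ (3 - 2 * sn E) * sn E ^ 2 / (1 - sn E)^2 := by
  set ε := sn E with hε
  have hε0 : 0 ≤ ε := sn_nonneg E
  -- invertibility of 1 + E
  have hunitCLM : IsUnit (toEuclideanCLM (𝕜 := ℝ) (n := n) (1 + E)) := by
    rw [_root_.map_add, _root_.map_one]
    have h : ‖-(toEuclideanCLM (𝕜 := ℝ) (n := n) E)‖ < 1 := by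
      rw [norm_neg]; exact hE
    have h2 := isUnit_one_sub_of_norm_lt_one h
    simpa [sub_neg_eq_add] using h2
  have hunit : IsUnit (1 + E) := by
    have := hunitCLM.map (Matrix.toEuclideanCLM (𝕜 := ℝ) (n := n)).symm
    simpa using this
  set A := (1 + E)⁻¹ with hAdef
  have hA1 : (1 + E) * A = 1 :=
    Matrix.mul_nonsing_inv _ ((Matrix.isUnit_iff_isUnit_det _).mp hunit)
  have hAe : A = 1 - E * A := by
    have : A + E * A = 1 := by
      calc A + E * A = (1 + E) * A := by noncomm_ring
        _ = 1 := hA1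
    linear_combination (norm := noncomm_ring) this
  -- norm bound on A
  have ha1 : (1 - ε) * sn A ≤ 1 := by
    have h1 : sn A ≤ 1 + ε * sn A := by
      calc sn A = sn (1 - E * A) := by rw [← hAe]
        _ ≤ sn 1 + sn (E * A) := sn_sub_le _ _
        _ ≤ 1 + ε * sn A := add_le_add sn_one_le (sn_mul_le E A)
    nlinarith [sn_nonneg A, h1]
  have ha0 : 0 ≤ sn A := sn_nonneg A
  -- identities
  have hDelta : Delta E = E * (E * A) := by
    rw [Delta, ← hAdef]
    linear_combination (norm := noncomm_ring) (1 - E) * hAe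
  have hED : E - Delta E = E * A := by
    rw [hDelta]
    linear_combination (norm := noncomm_ring) (-E) * hAe
  set x := sn A with hx
  have hd : sn (Delta E) ≤ ε * (ε * x) := by
    rw [hDelta]
    calc sn (E * (E * A)) ≤ ε * sn (E * A) := sn_mul_le _ _
      _ ≤ ε * (ε * x) := by
          have := sn_mul_le E A
          nlinarith [sn_nonneg (E * A)]
  have hed : sn (E - Delta E) ≤ ε * x := by rw [hED]; exact sn_mul_le _ _
  have hbound : sn (Delta1 E) ≤ 2 * (ε * (ε * x)) + (ε * x)^2 := by
    calc sn (Delta1 E) ≤ sn (Delta E + (Delta E)ᵀ) + sn ((E - Delta E)ᵀ * (E - Delta E)) :=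
          sn_add_le _ _
      _ ≤ (sn (Delta E) + sn (Delta E)ᵀ) + sn ((E - Delta E)ᵀ) * sn (E - Delta E) :=
          add_le_add (sn_add_le _ _) (sn_mul_le _ _)
      _ = 2 * sn (Delta E) + sn (E - Delta E) * sn (E - Delta E) := by
          rw [sn_transpose, sn_transpose]; ring
      _ ≤ 2 * (ε * (ε * x)) + (ε * x)^2 := by
          have h0 := sn_nonneg (E - Delta E)
          nlinarith [hd, hed]
  rw [le_div_iff₀ (by nlinarith : (0:ℝ) < (1 - ε)^2)]
  have hy : 0 ≤ (1 - ε) * x := mul_nonneg (by linarith) ha0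
  have h2 : ((1 - ε) * x)^2 ≤ 1 := by nlinarith [ha1, hy]
  have h3 : (1 - ε)^2 * x ≤ (1 - ε) := by nlinarith
  nlinarith [hbound, sq_nonneg ε, mul_nonneg (mul_nonneg hε0 hε0) ha0, sq_nonneg (ε*x)]
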